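/- Let m ∈ ℕ, let E_1, …, E_m be Banach lattices and G a Banach space. A continuous m-linear operator A : E_1 × ⋯ × E_m → G is almost Dunford–Pettis if and only if ‖A(x_{1,n},…,x_{m,n})‖ → 0 whenever, for each j = 1,…,m, (x_{j,n})_n is a disjoint weakly null sequence of positive elements of E_j. -/

import Mathlib

open Filter Topology

/-- A sequence in a Banach lattice is disjoint if `|x n| ⊓ |x k| = 0` for `n ≠ k`. -/
def DisjointSeq {E : Type*} [NormedAddCommGroup E] [Lattice E] [IsOrderedAddMonoid E]
    [HasSolidNorm E] (x : ℕ → E) : Prop :=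
  ∀ n k, n ≠ k → |x n| ⊓ |x k| = 0

/-- A sequence is weakly null if `f (x n) → 0` for every continuous linear functional `f`. -/
def WeaklyNull {E : Type*} [NormedAddCommGroup E] [NormedSpace ℝ E] (x : ℕ → E) : Prop :=
  ∀ f : E →L[ℝ] ℝ, Tendsto (fun n => f (x n)) atTop (𝓝 0)


section
open Finset
section Helpers

variable {E : Type*} [NormedAddCommGroup E] [Lattice E] [IsOrderedAddMonoid E] [HasSolidNorm E]

lemma posPart_le_abs' (a : E) : a⁺ ≤ |a| := by
  rw [← posPart_add_negPart a]; exact le_add_of_nonneg_right (negPart_nonneg a)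

lemma negPart_le_abs' (a : E) : a⁻ ≤ |a| := by
  rw [← posPart_add_negPart a]; exact le_add_of_nonneg_left (posPart_nonneg a)

/-- subadditivity of inf against a sum, for nonnegative elements -/
lemma inf_add_le' (a b c : E) (ha : 0 ≤ a) (hb : 0 ≤ b) (hc : 0 ≤ c) :
    a ⊓ (b + c) ≤ a ⊓ b + a ⊓ c := by
  set d := a ⊓ (b + c) with hd
  have h1 : d - c ≤ a := by
    have : d ≤ a := inf_le_left
    have : d ≤ a + c := le_add_of_le_of_nonneg this hc
    exact sub_le_iff_le_add.2 this
  have h2 : d - c ≤ b := sub_le_iff_le_add.2 inf_le_right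
  have h3 : d - a ⊓ b ≤ c := by
    have : d - c ≤ a ⊓ b := le_inf h1 h2
    exact sub_le_iff_le_add.2 (by simpa [add_comm] using sub_le_iff_le_add.1 this)
  have h4 : d - a ⊓ b ≤ a := by
    have : d ≤ a + a ⊓ b := le_add_of_le_of_nonneg inf_le_left (le_inf ha hb)
    exact sub_le_iff_le_add.2 this
  have : d - a ⊓ b ≤ a ⊓ c := le_inf h4 h3
  have := sub_le_iff_le_add.1 this
  simpa [add_comm] using this

lemma inf_nsmul_eq_zero (a b : E) (ha : 0 ≤ a) (hb : 0 ≤ b) (hab : a ⊓ b = 0) (m : ℕ) :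
    a ⊓ (m • b) = 0 := by
  induction m with
  | zero => simpa using inf_eq_right.2 ha
  | succ m ih =>
      have hnn : 0 ≤ a ⊓ ((m + 1) • b) := le_inf ha (nsmul_nonneg hb _)
      have : a ⊓ ((m + 1) • b) ≤ a ⊓ (m • b) + a ⊓ b := by
        have := inf_add_le' a (m • b) b ha (nsmul_nonneg hb m) hb
        simpa [succ_nsmul] using this
      rw [ih, hab, add_zero] at this
      exact le_antisymm this hnn

lemma nsmul_inf_nsmul_eq_zero (a b : E) (ha : 0 ≤ a) (hb : 0 ≤ b) (hab : a ⊓ b = 0)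
    (m k : ℕ) : (m • a) ⊓ (k • b) = 0 := by
  have h1 : a ⊓ (k • b) = 0 := inf_nsmul_eq_zero a b ha hb hab k
  have h2 : (k • b) ⊓ a = 0 := by rwa [inf_comm] at h1
  have := inf_nsmul_eq_zero (k • b) a (nsmul_nonneg hb k) ha h2 m
  rwa [inf_comm] at this

lemma inf_sum_le' (a : E) (v : ℕ → E) (ha : 0 ≤ a) (hv : ∀ n, 0 ≤ v n) (F : Finset ℕ) :
    a ⊓ (∑ n ∈ F, v n) ≤ ∑ n ∈ F, a ⊓ v n := by
  classical
  induction F using Finset.induction with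
  | empty => simpa using inf_le_right
  | @insert k F' hk ih =>
      rw [Finset.sum_insert hk, Finset.sum_insert hk]
      calc a ⊓ (v k + ∑ n ∈ F', v n)
          ≤ a ⊓ v k + a ⊓ (∑ n ∈ F', v n) :=
            inf_add_le' a (v k) _ ha (hv k) (Finset.sum_nonneg fun n _ => hv n)
        _ ≤ a ⊓ v k + ∑ n ∈ F', a ⊓ v n := by exact add_le_add_right ih _

/-- A finite sum of pairwise disjoint nonnegative elements, each `≤ y`, is `≤ y`. -/
lemma sum_le_of_pairwise_disjoint (v : ℕ → E) (y : E) (h0 : ∀ n, 0 ≤ v n)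
    (hy : ∀ n, v n ≤ y) (hd : ∀ n k, n ≠ k → v n ⊓ v k = 0) (F : Finset ℕ) :
    ∑ n ∈ F, v n ≤ y := by
  classical
  induction F using Finset.induction with
  | empty => simpa using le_trans (h0 0) (hy 0)
  | @insert k F' hkF ih =>
      rw [Finset.sum_insert hkF]
      set S := ∑ n ∈ F', v n with hS
      have hS0 : 0 ≤ S := Finset.sum_nonneg fun n _ => h0 n
      have hdisj : v k ⊓ S = 0 := by
        have h1 : v k ⊓ S ≤ ∑ n ∈ F', v k ⊓ v n := inf_sum_le' (v k) v (h0 k) h0 F'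
        have h2 : ∑ n ∈ F', v k ⊓ v n = 0 := by
          apply Finset.sum_eq_zero
          intro n hn
          exact hd k n (by rintro rfl; exact hkF hn)
        rw [h2] at h1
        exact le_antisymm h1 (le_inf (h0 k) hS0)
      have : v k + S = v k ⊔ S := by
        have := inf_add_sup (v k) S
        rw [hdisj, zero_add] at this
        exact this.symm
      rw [this]
      exact sup_le (hy k) ih

end Helpers

section Extension

variable {E : Type*} [NormedAddCommGroup E] [Lattice E] [IsOrderedAddMonoid E] [HasSolidNorm E] [NormedSpace ℝ E]

/-- An additive, bounded, nonnegative functional on the positive cone extends to a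
continuous linear functional. -/
lemma exists_extension_of_additive_on_cone (p : E → ℝ) (C : ℝ)
    (hadd : ∀ a b, 0 ≤ a → 0 ≤ b → p (a + b) = p a + p b)
    (hpos : ∀ a, 0 ≤ a → 0 ≤ p a)
    (hbound : ∀ a, 0 ≤ a → p a ≤ C * ‖a‖) :
    ∃ F : E →L[ℝ] ℝ, ∀ a, 0 ≤ a → F a = p a := by
  have hp0 : p 0 = 0 := by
    have := hadd 0 0 le_rfl le_rfl
    simp at this; linarith
  have hdiff : ∀ a b c d : E, 0 ≤ a → 0 ≤ b → 0 ≤ c → 0 ≤ d → a + d = c + b →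
      p a - p b = p c - p d := by
    intro a b c d ha hb hc hd h
    have := hadd a d ha hd
    rw [h, hadd c b hc hb] at this
    linarith
  set q : E → ℝ := fun y => p y⁺ - p y⁻ with hq
  have hq_eq : ∀ a b : E, 0 ≤ a → 0 ≤ b → q (a - b) = p a - p b := by
    intro a b ha hb
    have key : (a - b)⁺ + b = a + (a - b)⁻ :=
      sub_eq_sub_iff_add_eq_add.1 (posPart_sub_negPart (a - b))
    show p (a-b)⁺ - p (a-b)⁻ = p a - p b
    exact hdiff ((a-b)⁺) ((a-b)⁻) a b (posPart_nonneg _) (negPart_nonneg _) ha hb key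
  have hq_cone : ∀ a : E, 0 ≤ a → q a = p a := by
    intro a ha
    have := hq_eq a 0 ha le_rfl
    simpa [hp0] using this
  have hq_add : ∀ y z : E, q (y + z) = q y + q z := by
    intro y z
    have h1 : y + z = (y⁺ + z⁺) - (y⁻ + z⁻) := by
      conv_lhs => rw [← posPart_sub_negPart y, ← posPart_sub_negPart z]
      abel
    rw [h1, hq_eq _ _ (add_nonneg (posPart_nonneg _) (posPart_nonneg _))
      (add_nonneg (negPart_nonneg _) (negPart_nonneg _)),
      hadd _ _ (posPart_nonneg _) (posPart_nonneg _),
      hadd _ _ (negPart_nonneg _) (negPart_nonneg _)]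
    simp only [hq]; ring
  have hq0 : q 0 = 0 := by simpa [hp0] using hq_cone 0 le_rfl
  set qh : E →+ ℝ := AddMonoidHom.mk' q hq_add with hqh
  set C' : ℝ := max C 0 with hC'
  have hC : 0 ≤ C' := le_max_right _ _
  have hqbound : ∀ y : E, |q y| ≤ 2 * C' * ‖y‖ := by
    intro y
    have h1' : 0 ≤ p y⁺ := hpos _ (posPart_nonneg _)
    have h2' : 0 ≤ p y⁻ := hpos _ (negPart_nonneg _)
    have hn1 : ‖y⁺‖ ≤ ‖y‖ := by
      have h : |y⁺| ≤ |y| := by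
        rw [abs_of_nonneg (posPart_nonneg _)]; exact posPart_le_abs' y
      calc ‖y⁺‖ ≤ ‖|y|‖ := HasSolidNorm.solid (by simpa using h)
        _ = ‖y‖ := norm_abs_eq_norm y
    have hn2 : ‖y⁻‖ ≤ ‖y‖ := by
      have h : |y⁻| ≤ |y| := by
        rw [abs_of_nonneg (negPart_nonneg _)]; exact negPart_le_abs' y
      calc ‖y⁻‖ ≤ ‖|y|‖ := HasSolidNorm.solid (by simpa using h)
        _ = ‖y‖ := norm_abs_eq_norm y
    have h1 : p y⁺ ≤ C' * ‖y‖ := by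
      calc p y⁺ ≤ C * ‖y⁺‖ := hbound _ (posPart_nonneg _)
        _ ≤ C' * ‖y⁺‖ := by exact mul_le_mul_of_nonneg_right (le_max_left _ _) (norm_nonneg _)
        _ ≤ C' * ‖y‖ := by gcongr
    have h2 : p y⁻ ≤ C' * ‖y‖ := by
      calc p y⁻ ≤ C * ‖y⁻‖ := hbound _ (negPart_nonneg _)
        _ ≤ C' * ‖y⁻‖ := by exact mul_le_mul_of_nonneg_right (le_max_left _ _) (norm_nonneg _)
        _ ≤ C' * ‖y‖ := by gcongr
    have : |q y| ≤ p y⁺ + p y⁻ := by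
      rw [hq]
      exact abs_sub_le_iff.2 ⟨by linarith, by linarith⟩
    linarith
  have hlip : LipschitzWith (Real.toNNReal (2 * C')) q := by
    apply LipschitzWith.of_dist_le_mul
    intro a b
    have : q a - q b = q (a - b) := by
      have := hq_add (a - b) b
      simp only [sub_add_cancel] at this
      linarith
    rw [Real.dist_eq, dist_eq_norm, this]
    calc |q (a - b)| ≤ 2 * C' * ‖a - b‖ := hqbound _
      _ ≤ (Real.toNNReal (2 * C') : ℝ) * ‖a - b‖ := by
          gcongr
          exact Real.le_coe_toNNReal _
  refine ⟨AddMonoidHom.toRealLinearMap qh hlip.continuous, ?_⟩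
  intro a ha
  change q a = p a
  exact hq_cone a ha

/-- A finite sum of suprema is `≤ C` provided all "simultaneous choices" sums are. -/
lemma sum_ciSup_le {a : ℕ → ℕ → ℝ} (hb : ∀ n, BddAbove (Set.range (a n))) {C : ℝ}
    (F : Finset ℕ) (h : ∀ mt : ℕ → ℕ, ∑ n ∈ F, a n (mt n) ≤ C) :
    ∑ n ∈ F, (⨆ m, a n m) ≤ C := by
  classical
  induction F using Finset.induction generalizing C with
  | empty => simpa using h (fun _ => 0)
  | @insert k F' hkF ih =>
      rw [Finset.sum_insert hkF]
      have : ∀ m : ℕ, a k m + ∑ n ∈ F', (⨆ m', a n m') ≤ C := by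
        intro m
        have := ih (C := C - a k m) ?_
        · linarith
        intro mt
        have := h (Function.update mt k m)
        rw [Finset.sum_insert hkF, Function.update_self] at this
        have heq : ∑ n ∈ F', a n (Function.update mt k m n) = ∑ n ∈ F', a n (mt n) := by
          apply Finset.sum_congr rfl
          intro n hn
          rw [Function.update_of_ne (by rintro rfl; exact hkF hn)]
        rw [heq] at this
        linarith
      have h2 : (⨆ m, a k m) ≤ C - ∑ n ∈ F', (⨆ m', a n m') :=
        ciSup_le fun m => by linarith [this m]
      linarith

end Extension

section Core

variable {E : Type*} [NormedAddCommGroup E] [Lattice E] [IsOrderedAddMonoid E] [HasSolidNorm E] [NormedSpace ℝ E]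

lemma tendsto_posPart_of_positive (x : ℕ → E) (hd : DisjointSeq x) (hw : WeaklyNull x)
    (g : E →L[ℝ] ℝ) (hg : ∀ y : E, 0 ≤ y → 0 ≤ g y) :
    Tendsto (fun n => g ((x n)⁺)) atTop (𝓝 0) := by
  have gmono : ∀ a b : E, a ≤ b → g a ≤ g b := by
    intro a b hab
    have := hg (b - a) (sub_nonneg.2 hab)
    rw [map_sub] at this
    linarith
  set u : ℕ → E := fun n => (x n)⁺ with hu
  have hu0 : ∀ n, 0 ≤ u n := fun n => posPart_nonneg _
  have hdisj_u : ∀ n k, n ≠ k → u n ⊓ u k = 0 := by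
    intro n k hnk
    refine le_antisymm ?_ (le_inf (hu0 n) (hu0 k))
    calc u n ⊓ u k ≤ |x n| ⊓ |x k| := inf_le_inf (posPart_le_abs' _) (posPart_le_abs' _)
      _ = 0 := hd n k hnk
  set h : ℕ → E → ℝ := fun n y => ⨆ m : ℕ, g (y ⊓ (m + 1) • u n) with hh
  have hterm_nonneg : ∀ n (y : E), 0 ≤ y → ∀ m : ℕ, 0 ≤ g (y ⊓ (m + 1) • u n) :=
    fun n y hy m => hg _ (le_inf hy (nsmul_nonneg (hu0 n) _))
  have hterm_le : ∀ n (y : E), ∀ m : ℕ, g (y ⊓ (m + 1) • u n) ≤ g y :=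
    fun n y m => gmono _ _ inf_le_left
  have hbdd : ∀ n (y : E), BddAbove (Set.range fun m : ℕ => g (y ⊓ (m + 1) • u n)) := by
    intro n y
    refine ⟨g y, ?_⟩
    rintro r ⟨m, rfl⟩
    exact hterm_le n y m
  have h_le : ∀ n (y : E), h n y ≤ g y := fun n y => ciSup_le (hterm_le n y)
  have h_nonneg : ∀ n (y : E), 0 ≤ y → 0 ≤ h n y := fun n y hy =>
    le_trans (hterm_nonneg n y hy 0) (le_ciSup (hbdd n y) 0)
  have h_add : ∀ n (a b : E), 0 ≤ a → 0 ≤ b → h n (a + b) = h n a + h n b := by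
    intro n a b ha hb
    apply le_antisymm
    · apply ciSup_le
      intro m
      set w : E := (m + 1) • u n with hw'
      have hw0 : 0 ≤ w := nsmul_nonneg (hu0 n) _
      have step : (a + b) ⊓ w ≤ a ⊓ w + b ⊓ w := by
        calc (a + b) ⊓ w = w ⊓ (a + b) := inf_comm _ _
          _ ≤ w ⊓ a + w ⊓ b := inf_add_le' w a b hw0 ha hb
          _ = a ⊓ w + b ⊓ w := by rw [inf_comm w a, inf_comm w b]
      calc g ((a + b) ⊓ w) ≤ g (a ⊓ w + b ⊓ w) := gmono _ _ step
        _ = g (a ⊓ w) + g (b ⊓ w) := map_add g _ _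
        _ ≤ h n a + h n b := add_le_add (le_ciSup (hbdd n a) m) (le_ciSup (hbdd n b) m)
    · have key : ∀ m m' : ℕ, g (a ⊓ (m + 1) • u n) + g (b ⊓ (m' + 1) • u n) ≤ h n (a + b) := by
        intro m m'
        set M := max m m' with hM
        have hm : a ⊓ (m + 1) • u n ≤ a ⊓ (M + 1) • u n :=
          inf_le_inf_left a (nsmul_le_nsmul_left (hu0 n) (by omega))
        have hm' : b ⊓ (m' + 1) • u n ≤ b ⊓ (M + 1) • u n :=
          inf_le_inf_left b (nsmul_le_nsmul_left (hu0 n) (by omega))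
        have hsum : a ⊓ (M + 1) • u n + b ⊓ (M + 1) • u n ≤ (a + b) ⊓ ((2 * M + 1 + 1) • u n) := by
          apply le_inf
          · exact add_le_add inf_le_left inf_le_left
          · calc a ⊓ (M + 1) • u n + b ⊓ (M + 1) • u n
                ≤ (M + 1) • u n + (M + 1) • u n := add_le_add inf_le_right inf_le_right
              _ = (2 * M + 1 + 1) • u n := by rw [← add_nsmul]; congr 1; omega
        calc g (a ⊓ (m + 1) • u n) + g (b ⊓ (m' + 1) • u n)
            ≤ g (a ⊓ (M + 1) • u n) + g (b ⊓ (M + 1) • u n) :=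
              add_le_add (gmono _ _ hm) (gmono _ _ hm')
          _ = g (a ⊓ (M + 1) • u n + b ⊓ (M + 1) • u n) := (map_add g _ _).symm
          _ ≤ g ((a + b) ⊓ ((2 * M + 1 + 1) • u n)) := gmono _ _ hsum
          _ ≤ h n (a + b) := le_ciSup (hbdd n (a + b)) (2 * M + 1)
      have h1 : h n a ≤ h n (a + b) - h n b := by
        apply ciSup_le
        intro m
        have h2 : h n b ≤ h n (a + b) - g (a ⊓ (m + 1) • u n) := by
          apply ciSup_le
          intro m'
          linarith [key m m']
        linarith
      linarith
  have hsum_le : ∀ (y : E), 0 ≤ y → ∀ F : Finset ℕ, ∑ n ∈ F, h n y ≤ g y := by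
    intro y hy F
    apply sum_ciSup_le (fun n => hbdd n y) F
    intro mt
    rw [← map_sum g (fun n => y ⊓ (mt n + 1) • u n) F]
    apply gmono
    apply sum_le_of_pairwise_disjoint (fun n => y ⊓ (mt n + 1) • u n) y
      (fun n => le_inf hy (nsmul_nonneg (hu0 n) _)) (fun n => inf_le_left) ?_ F
    intro n k hnk
    refine le_antisymm ?_ (le_inf (le_inf hy (nsmul_nonneg (hu0 n) _))
      (le_inf hy (nsmul_nonneg (hu0 k) _)))
    calc (y ⊓ (mt n + 1) • u n) ⊓ (y ⊓ (mt k + 1) • u k)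
        ≤ ((mt n + 1) • u n) ⊓ ((mt k + 1) • u k) := inf_le_inf inf_le_right inf_le_right
      _ = 0 := nsmul_inf_nsmul_eq_zero (u n) (u k) (hu0 n) (hu0 k) (hdisj_u n k hnk) _ _
  have hsummable : ∀ y : E, 0 ≤ y → Summable (fun n => h n y) := fun y hy =>
    summable_of_sum_range_le (fun n => h_nonneg n y hy) (fun N => hsum_le y hy (Finset.range N))
  set p : E → ℝ := fun y => ∑' n, h n y with hp
  have hp_pos : ∀ y : E, 0 ≤ y → 0 ≤ p y := fun y hy => tsum_nonneg (fun n => h_nonneg n y hy)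
  have hp_bound : ∀ y : E, 0 ≤ y → p y ≤ ‖g‖ * ‖y‖ := by
    intro y hy
    have h1 : p y ≤ g y :=
      Summable.tsum_le_of_sum_range_le (hsummable y hy) (fun N => hsum_le y hy (Finset.range N))
    calc p y ≤ g y := h1
      _ ≤ |g y| := le_abs_self _
      _ = ‖g y‖ := (Real.norm_eq_abs _).symm
      _ ≤ ‖g‖ * ‖y‖ := g.le_opNorm y
  have hp_add : ∀ a b : E, 0 ≤ a → 0 ≤ b → p (a + b) = p a + p b := by
    intro a b ha hb
    calc p (a + b) = ∑' n, (h n a + h n b) := tsum_congr fun n => h_add n a b ha hb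
      _ = p a + p b := Summable.tsum_add (hsummable a ha) (hsummable b hb)
  obtain ⟨P, hP⟩ := exists_extension_of_additive_on_cone p ‖g‖ hp_add hp_pos hp_bound
  have hPx : ∀ k, P (x k) = g (u k) := by
    intro k
    have hx : x k = u k - (x k)⁻ := (posPart_sub_negPart (x k)).symm
    rw [hx, map_sub, hP _ (hu0 k), hP _ (negPart_nonneg _)]
    have hpu : p (u k) = g (u k) := by
      have hzero : ∀ n, n ≠ k → h n (u k) = 0 := by
        intro n hnk
        have hz : ∀ m : ℕ, u k ⊓ (m + 1) • u n = 0 := fun m =>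
          inf_nsmul_eq_zero (u k) (u n) (hu0 k) (hu0 n) (hdisj_u k n (Ne.symm hnk)) (m + 1)
        show (⨆ m : ℕ, g (u k ⊓ (m + 1) • u n)) = 0
        simp [hz]
      have hself : h k (u k) = g (u k) := by
        have heq : ∀ m : ℕ, u k ⊓ (m + 1) • u k = u k := by
          intro m
          apply inf_eq_left.2
          calc u k = 1 • u k := (one_nsmul _).symm
            _ ≤ (m + 1) • u k := nsmul_le_nsmul_left (hu0 k) (by omega)
        show (⨆ m : ℕ, g (u k ⊓ (m + 1) • u k)) = g (u k)
        simp [heq]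
      calc p (u k) = h k (u k) := tsum_eq_single k hzero
        _ = g (u k) := hself
    have hpv : p ((x k)⁻) = 0 := by
      have hzero : ∀ n, h n ((x k)⁻) = 0 := by
        intro n
        have hz : ∀ m : ℕ, (x k)⁻ ⊓ (m + 1) • u n = 0 := by
          intro m
          apply inf_nsmul_eq_zero _ _ (negPart_nonneg _) (hu0 n) ?_ (m + 1)
          by_cases hnk : n = k
          · subst hnk
            have := posPart_inf_negPart_eq_zero (x n)
            rwa [inf_comm] at this
          · refine le_antisymm ?_ (le_inf (negPart_nonneg _) (hu0 n))
            calc (x k)⁻ ⊓ u n ≤ |x k| ⊓ |x n| := inf_le_inf (negPart_le_abs' _) (posPart_le_abs' _)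
              _ = 0 := hd k n (Ne.symm hnk)
        show (⨆ m : ℕ, g ((x k)⁻ ⊓ (m + 1) • u n)) = 0
        simp [hz]
      calc p ((x k)⁻) = ∑' n, (0 : ℝ) := tsum_congr hzero
        _ = 0 := tsum_zero
    rw [hpu, hpv, sub_zero]
  have hwP := hw P
  rw [show (fun n => P (x n)) = fun n => g (u n) from funext hPx] at hwP
  exact hwP

lemma weaklyNull_posPart (x : ℕ → E) (hd : DisjointSeq x) (hw : WeaklyNull x) :
    WeaklyNull (fun n => (x n)⁺) := by
  intro f
  have hnorm_le : ∀ z y : E, 0 ≤ z → z ≤ y → ‖z‖ ≤ ‖y‖ := by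
    intro z y hz hzy
    apply HasSolidNorm.solid
    rw [abs_of_nonneg hz, abs_of_nonneg (hz.trans hzy)]
    exact hzy
  set p : E → ℝ := fun y => sSup ((fun z => f z) '' {z | 0 ≤ z ∧ z ≤ y}) with hp
  have hmem0 : ∀ y : E, 0 ≤ y → (0 : ℝ) ∈ (fun z => f z) '' {z | 0 ≤ z ∧ z ≤ y} :=
    fun y hy => ⟨0, ⟨le_rfl, hy⟩, map_zero f⟩
  have hbdd : ∀ y : E, 0 ≤ y → ∀ r ∈ (fun z => f z) '' {z | 0 ≤ z ∧ z ≤ y}, r ≤ ‖f‖ * ‖y‖ := by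
    rintro y hy r ⟨z, ⟨hz0, hzy⟩, rfl⟩
    calc f z ≤ ‖f‖ * ‖z‖ := le_trans (le_abs_self _) (f.le_opNorm z)
      _ ≤ ‖f‖ * ‖y‖ := mul_le_mul_of_nonneg_left (hnorm_le z y hz0 hzy) (norm_nonneg f)
  have hbdd' : ∀ y : E, 0 ≤ y → BddAbove ((fun z => f z) '' {z | 0 ≤ z ∧ z ≤ y}) :=
    fun y hy => ⟨‖f‖ * ‖y‖, fun r hr => hbdd y hy r hr⟩
  have hp_pos : ∀ y : E, 0 ≤ y → 0 ≤ p y := fun y hy => le_csSup (hbdd' y hy) (hmem0 y hy)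
  have hp_ge : ∀ y : E, 0 ≤ y → f y ≤ p y := fun y hy =>
    le_csSup (hbdd' y hy) ⟨y, ⟨hy, le_rfl⟩, rfl⟩
  have hp_bound : ∀ y : E, 0 ≤ y → p y ≤ ‖f‖ * ‖y‖ := fun y hy =>
    csSup_le ⟨0, hmem0 y hy⟩ (hbdd y hy)
  have hp_add : ∀ a b : E, 0 ≤ a → 0 ≤ b → p (a + b) = p a + p b := by
    intro a b ha hb
    apply le_antisymm
    · apply csSup_le ⟨0, hmem0 _ (add_nonneg ha hb)⟩
      rintro r ⟨z, ⟨hz0, hzab⟩, rfl⟩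
      have hz1 : 0 ≤ z ⊓ a := le_inf hz0 ha
      have hz1' : z ⊓ a ≤ a := inf_le_right
      have hz2 : 0 ≤ z - z ⊓ a := sub_nonneg.2 inf_le_left
      have hz2' : z - z ⊓ a ≤ b := by
        have hkey : z ⊓ a + z ⊔ a = z + a := inf_add_sup z a
        have hsup : z ⊔ a ≤ a + b := sup_le hzab (le_add_of_nonneg_right hb)
        have : z - z ⊓ a = z ⊔ a - a := by
          apply sub_eq_sub_iff_add_eq_add.2
          rw [add_comm (z ⊓ a)] at hkey
          exact hkey.symm
        rw [this]
        have := sub_le_sub_right hsup a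
        simpa using this
      have hsplit : f z = f (z ⊓ a) + f (z - z ⊓ a) := by
        rw [← map_add]
        congr 1
        abel
      show f z ≤ p a + p b
      rw [hsplit]
      exact add_le_add (le_csSup (hbdd' a ha) ⟨z ⊓ a, ⟨hz1, hz1'⟩, rfl⟩)
        (le_csSup (hbdd' b hb) ⟨z - z ⊓ a, ⟨hz2, hz2'⟩, rfl⟩)
    · have key : ∀ z1 z2 : E, 0 ≤ z1 → z1 ≤ a → 0 ≤ z2 → z2 ≤ b →
          f z1 + f z2 ≤ p (a + b) := by
        intro z1 z2 h1 h1' h2 h2'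
        rw [← map_add]
        exact le_csSup (hbdd' _ (add_nonneg ha hb))
          ⟨z1 + z2, ⟨add_nonneg h1 h2, add_le_add h1' h2'⟩, rfl⟩
      have h1 : p a ≤ p (a + b) - p b := by
        apply csSup_le ⟨0, hmem0 a ha⟩
        rintro r ⟨z1, ⟨hz10, hz1a⟩, rfl⟩
        have h2 : p b ≤ p (a + b) - f z1 := by
          apply csSup_le ⟨0, hmem0 b hb⟩
          rintro r' ⟨z2, ⟨hz20, hz2b⟩, rfl⟩
          linarith [key z1 z2 hz10 hz1a hz20 hz2b]
        linarith
      linarith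
  obtain ⟨F, hF⟩ := exists_extension_of_additive_on_cone p ‖f‖ hp_add hp_pos hp_bound
  have hFpos : ∀ y : E, 0 ≤ y → 0 ≤ F y := fun y hy => by rw [hF y hy]; exact hp_pos y hy
  have hGpos : ∀ y : E, 0 ≤ y → 0 ≤ (F - f) y := by
    intro y hy
    rw [ContinuousLinearMap.sub_apply, hF y hy]
    linarith [hp_ge y hy]
  have h1 := tendsto_posPart_of_positive x hd hw F hFpos
  have h2 := tendsto_posPart_of_positive x hd hw (F - f) hGpos
  have h3 := h1.sub h2
  rw [sub_zero] at h3
  have heq : (fun n => F ((x n)⁺) - (F - f) ((x n)⁺)) = fun n => f ((x n)⁺) := by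
    funext n
    rw [ContinuousLinearMap.sub_apply]
    ring
  rwa [heq] at h3

lemma weaklyNull_negPart (x : ℕ → E) (hd : DisjointSeq x) (hw : WeaklyNull x) :
    WeaklyNull (fun n => (x n)⁻) := by
  have heq : (fun n => (x n)⁻) = fun n => (-(x n))⁺ := funext fun n => (posPart_neg (x n)).symm
  rw [heq]
  apply weaklyNull_posPart
  · intro n k hnk
    simpa [abs_neg] using hd n k hnk
  · intro f
    have := (hw f).neg
    simpa using this

end Core


end

/-- A continuous `m`-linear operator is almost Dunford–Pettis if and only if
`‖A (x 1 n, …, x m n)‖ → 0` whenever each `(x j n)ₙ` is a disjoint weakly null sequence of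
**positive** elements. -/
theorem almostDunfordPettis_iff_positive
    {m : ℕ} {E : Fin m → Type*} [∀ i, NormedAddCommGroup (E i)] [∀ i, Lattice (E i)]
    [∀ i, IsOrderedAddMonoid (E i)] [∀ i, HasSolidNorm (E i)]
    [∀ i, NormedSpace ℝ (E i)] [∀ i, CompleteSpace (E i)]
    {G : Type*} [NormedAddCommGroup G] [NormedSpace ℝ G] [CompleteSpace G]
    (A : ContinuousMultilinearMap ℝ E G) :
    (∀ x : ∀ i, ℕ → E i, (∀ i, DisjointSeq (x i)) → (∀ i, WeaklyNull (x i)) →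
        Tendsto (fun n => ‖A (fun i => x i n)‖) atTop (𝓝 0)) ↔
      (∀ x : ∀ i, ℕ → E i, (∀ i, DisjointSeq (x i)) → (∀ i, WeaklyNull (x i)) →
        (∀ i n, 0 ≤ x i n) →
        Tendsto (fun n => ‖A (fun i => x i n)‖) atTop (𝓝 0)) := by
  constructor
  · intro h x hd hw _
    exact h x hd hw
  · intro h x hd hw
    classical
    -- sign-pattern sequences
    set y : (Fin m → Bool) → ∀ i, ℕ → E i :=
      fun r i n => if r i then (x i n)⁺ else (x i n)⁻ with hy
    have hy_nonneg : ∀ r i n, 0 ≤ y r i n := by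
      intro r i n
      by_cases hri : r i <;> simp [hy, hri, posPart_nonneg, negPart_nonneg]
    have hy_le_abs : ∀ r i n, y r i n ≤ |x i n| := by
      intro r i n
      by_cases hri : r i <;> simp [hy, hri, posPart_le_abs', negPart_le_abs']
    have hy_disj : ∀ r i, DisjointSeq (y r i) := by
      intro r i n k hnk
      refine le_antisymm ?_ (le_inf (abs_nonneg _) (abs_nonneg _))
      calc |y r i n| ⊓ |y r i k| = y r i n ⊓ y r i k := by
            rw [abs_of_nonneg (hy_nonneg r i n), abs_of_nonneg (hy_nonneg r i k)]
        _ ≤ |x i n| ⊓ |x i k| := inf_le_inf (hy_le_abs r i n) (hy_le_abs r i k)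
        _ = 0 := hd i n k hnk
    have hy_weak : ∀ r i, WeaklyNull (y r i) := by
      intro r i
      by_cases hri : r i
      · have : y r i = fun n => (x i n)⁺ := by funext n; simp [hy, hri]
        rw [this]
        exact weaklyNull_posPart (x i) (hd i) (hw i)
      · have : y r i = fun n => (x i n)⁻ := by funext n; simp [hy, hri]
        rw [this]
        exact weaklyNull_negPart (x i) (hd i) (hw i)
    have htend : ∀ r : Fin m → Bool,
        Tendsto (fun n => ‖A (fun i => y r i n)‖) atTop (𝓝 0) :=
      fun r => h (y r) (hy_disj r) (hy_weak r) (fun i n => hy_nonneg r i n)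
    -- the multilinear expansion bound
    have hbound : ∀ n, ‖A (fun i => x i n)‖ ≤
        ∑ r : Fin m → Bool, ‖A (fun i => y r i n)‖ := by
      intro n
      set gg : ∀ i, Bool → E i := fun i t => if t then (x i n)⁺ else -((x i n)⁻) with hgg
      have hxe : (fun i => x i n) = fun i => ∑ t : Bool, gg i t := by
        funext i
        rw [Fintype.sum_bool]
        simp only [hgg, if_pos, if_neg]
        simp only [Bool.false_eq_true, if_true, if_false]
        rw [← sub_eq_add_neg]
        exact (posPart_sub_negPart (x i n)).symm
      rw [hxe, A.map_sum]
      refine le_trans (norm_sum_le _ _) (le_of_eq ?_)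
      apply Finset.sum_congr rfl
      intro r _
      set c : Fin m → ℝ := fun i => if r i then 1 else -1 with hc
      have hsm : (fun i => gg i (r i)) = fun i => c i • y r i n := by
        funext i
        by_cases hri : r i <;> simp [hgg, hc, hy, hri]
      rw [hsm, A.map_smul_univ]
      rw [norm_smul]
      have habs : ‖∏ i, c i‖ = 1 := by
        rw [norm_prod]
        apply Finset.prod_eq_one
        intro i _
        by_cases hri : r i <;> simp [hc, hri]
      rw [habs, one_mul]
    apply squeeze_zero (fun n => norm_nonneg _) hbound
    have := tendsto_finset_sum (Finset.univ : Finset (Fin m → Bool))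
      (fun r _ => htend r)
    simpa using this
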